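/- Assume M > 0. Then for every λ > M the improper integrals below converge and F(λ) = −∫_λ^{+∞} L′(μ)/μ dμ = L(λ)/λ − ∫_λ^{+∞} L(μ)/μ² dμ. -/

import Mathlib

open MeasureTheory Filter Set Topology Metric

section Aux
lemma ftc_ae_lip (g g' : ℝ → ℝ) (a b : ℝ) (hab : a ≤ b) (K : ℝ)
    (hcont : Continuous g)
    (hlip : ∀ x y : ℝ, |g x - g y| ≤ K * |x - y|)
    (hg'meas : AEStronglyMeasurable g' (volume.restrict (Set.Ioc a b)))
    (hderiv : ∀ᵐ θ ∂(volume : Measure ℝ), HasDerivAt g (g' θ) θ) :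
    ∫ θ in Set.Ioc a b, g' θ = g b - g a := by
  set h : ℕ → ℝ := fun n => ((n : ℝ) + 1)⁻¹ with hh
  have hpos : ∀ n, 0 < h n := fun n => by positivity
  have hto0 : Tendsto h atTop (𝓝 0) := by
    simpa [hh, one_div] using tendsto_one_div_add_atTop_nhds_zero_nat (𝕜 := ℝ)
  set Fn : ℕ → ℝ → ℝ := fun n θ => (g (θ + h n) - g θ) / h n with hFn
  -- sequence tendsto within ≠
  have hseq : ∀ θ : ℝ, Tendsto (fun n => θ + h n) atTop (𝓝[≠] θ) := by
    intro θ
    rw [tendsto_nhdsWithin_iff]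
    constructor
    · simpa using tendsto_const_nhds.add hto0
    · exact Eventually.of_forall fun n => by
        simp [Set.mem_compl_iff, (hpos n).ne']
  -- a.e. pointwise convergence
  have hptwise : ∀ᵐ θ ∂(volume.restrict (Set.Ioc a b)),
      Tendsto (fun n => Fn n θ) atTop (𝓝 (g' θ)) := by
    refine ae_restrict_of_ae ?_
    filter_upwards [hderiv] with θ hθ
    have hslope := hasDerivAt_iff_tendsto_slope.mp hθ
    have := hslope.comp (hseq θ)
    refine this.congr fun n => ?_
    simp [slope_def_field, Fn, add_sub_cancel_left]
  -- dominated convergence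
  have hK0 : 0 ≤ K := by
    have := hlip 1 0
    simp at this
    nlinarith [abs_nonneg (g 1 - g 0)]
  have hbdd : ∀ n, ∀ᵐ θ ∂(volume.restrict (Set.Ioc a b)), ‖Fn n θ‖ ≤ K := by
    intro n
    refine Eventually.of_forall fun θ => ?_
    have h1 : |g (θ + h n) - g θ| ≤ K * (h n) := by
      simpa [abs_of_pos (hpos n)] using hlip (θ + h n) θ
    rw [Real.norm_eq_abs, hFn, abs_div, abs_of_pos (hpos n), div_le_iff₀ (hpos n)]
    simpa using h1
  have hmeasn : ∀ n, AEStronglyMeasurable (Fn n) (volume.restrict (Set.Ioc a b)) :=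
    fun n => (((hcont.comp (continuous_add_right (h n))).sub hcont).div_const _).aestronglyMeasurable
  have hDCT : Tendsto (fun n => ∫ θ in Set.Ioc a b, Fn n θ) atTop
      (𝓝 (∫ θ in Set.Ioc a b, g' θ)) :=
    tendsto_integral_of_dominated_convergence (fun _ => K) hmeasn
      (integrable_const K) hbdd hptwise
  -- compute the integrals of Fn
  have hint : ∀ (c d : ℝ), IntervalIntegrable g volume c d := fun c d =>
    hcont.intervalIntegrable c d
  have hIn : ∀ n, ∫ θ in Set.Ioc a b, Fn n θ =
      ((∫ t in b..(b + h n), g t) - ∫ t in a..(a + h n), g t) / h n := by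
    intro n
    rw [← intervalIntegral.integral_of_le hab]
    have : ∫ θ in a..b, Fn n θ = (∫ θ in a..b, (g (θ + h n) - g θ)) / h n := by
      simp [hFn, intervalIntegral.integral_div]
    rw [this]
    congr 1
    have hcomp : IntervalIntegrable (fun θ => g (θ + h n)) volume a b :=
      (hcont.comp (continuous_add_right (h n))).intervalIntegrable _ _
    rw [intervalIntegral.integral_sub hcomp (hint a b)]
    rw [intervalIntegral.integral_comp_add_right g (h n)]
    have e1 : (∫ t in a..(a + h n), g t) + ∫ t in (a + h n)..(b + h n), g t
        = ∫ t in a..(b + h n), g t :=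
      intervalIntegral.integral_add_adjacent_intervals (hint _ _) (hint _ _)
    have e2 : (∫ t in a..b, g t) + ∫ t in b..(b + h n), g t = ∫ t in a..(b + h n), g t :=
      intervalIntegral.integral_add_adjacent_intervals (hint _ _) (hint _ _)
    linarith
  -- limits of endpoint averages
  have hend : ∀ x : ℝ, Tendsto (fun n => (∫ t in x..(x + h n), g t) / h n) atTop (𝓝 (g x)) := by
    intro x
    have hΦ : HasDerivAt (fun u => ∫ t in x..u, g t) (g x) x :=
      intervalIntegral.integral_hasDerivAt_right (hint x x)
        (hcont.stronglyMeasurableAtFilter _ _) hcont.continuousAt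
    have hslope := hasDerivAt_iff_tendsto_slope.mp hΦ
    have := hslope.comp (hseq x)
    refine this.congr fun n => ?_
    simp [slope_def_field, add_sub_cancel_left, intervalIntegral.integral_same]
  have hlim2 : Tendsto (fun n => ∫ θ in Set.Ioc a b, Fn n θ) atTop (𝓝 (g b - g a)) := by
    have := (hend b).sub (hend a)
    refine this.congr fun n => ?_
    rw [hIn n]
    ring
  exact tendsto_nhds_unique hDCT hlim2


lemma param_deriv (T : ℝ) (C ρ : ℝ → ℝ) (hCcont : Continuous C)
    (hρ : Measurable ρ) (B : ℝ) (hB : ∀ θ, |ρ θ| ≤ B)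
    (M : ℝ) (hCle : ∀ θ, C θ ≤ M) (x₀ : ℝ) (hx : M < x₀) :
    HasDerivAt (fun x => ∫ θ in (0:ℝ)..T, ρ θ / (x - C θ))
      (-∫ θ in (0:ℝ)..T, ρ θ / (x₀ - C θ) ^ 2) x₀ := by
  set ε : ℝ := (x₀ - M) / 2 with hε
  have hε_pos : 0 < ε := by simp [hε]; linarith
  have hballpos : ∀ x ∈ ball x₀ ε, ∀ θ : ℝ, ε ≤ x - C θ := by
    intro x hx' θ
    have h1 : |x - x₀| < ε := by simpa [Real.dist_eq] using hx'
    have := hCle θ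
    have h2 := abs_lt.mp h1
    simp [hε] at h2 ⊢
    linarith [h2.1]
  have hx₀pos : ∀ θ : ℝ, x₀ - M ≤ x₀ - C θ := fun θ => by linarith [hCle θ]
  have hmeas : ∀ x : ℝ, AEStronglyMeasurable (fun θ => ρ θ / (x - C θ))
      (volume.restrict (Set.uIoc (0:ℝ) T)) := fun x =>
    (hρ.div ((measurable_const.sub hCcont.measurable))).aestronglyMeasurable
  have hmeas' : AEStronglyMeasurable (fun θ => -(ρ θ / (x₀ - C θ) ^ 2))
      (volume.restrict (Set.uIoc (0:ℝ) T)) :=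
    ((hρ.div ((measurable_const.sub hCcont.measurable).pow_const 2)).neg).aestronglyMeasurable
  have hB0 : 0 ≤ B := le_trans (abs_nonneg _) (hB 0)
  have hint : IntervalIntegrable (fun θ => ρ θ / (x₀ - C θ)) volume 0 T := by
    rw [intervalIntegrable_iff]
    have hfin : (volume (Set.uIoc (0:ℝ) T)) < ⊤ := measure_Ioc_lt_top
    refine Integrable.mono' (integrableOn_const hfin.ne : IntegrableOn (fun _ : ℝ => B * (x₀ - M)⁻¹) _ _) (hmeas x₀) ?_
    refine Eventually.of_forall fun θ => ?_
    rw [Real.norm_eq_abs, abs_div]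
    have h1 : 0 < x₀ - M := by linarith
    have h2 : 0 < x₀ - C θ := lt_of_lt_of_le h1 (hx₀pos θ)
    rw [abs_of_pos h2, div_le_iff₀ h2]
    calc |ρ θ| ≤ B := hB θ
      _ = B * (x₀ - M)⁻¹ * (x₀ - M) := by field_simp
      _ ≤ B * (x₀ - M)⁻¹ * (x₀ - C θ) := by
          have : 0 ≤ B * (x₀ - M)⁻¹ := by positivity
          nlinarith [hx₀pos θ]
  have key := intervalIntegral.hasDerivAt_integral_of_dominated_loc_of_deriv_le
    (F := fun x θ => ρ θ / (x - C θ)) (F' := fun x θ => -(ρ θ / (x - C θ) ^ 2))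
    (a := (0:ℝ)) (b := T) (μ := volume) (x₀ := x₀) (bound := fun _ => B * (ε ^ 2)⁻¹)
    (ball_mem_nhds x₀ hε_pos) (Eventually.of_forall fun x => hmeas x) hint hmeas' ?_ ?_ ?_
  · have h2 := key.2
    simp only [intervalIntegral.integral_neg] at h2
    exact h2
  · -- bound
    refine Eventually.of_forall fun θ _ x hx' => ?_
    have h1 : ε ≤ x - C θ := hballpos x hx' θ
    have h2 : 0 < x - C θ := lt_of_lt_of_le hε_pos h1
    rw [Real.norm_eq_abs, abs_neg, abs_div, abs_of_pos (by positivity : (0:ℝ) < (x - C θ)^2),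
      div_le_iff₀ (by positivity : (0:ℝ) < (x - C θ)^2)]
    calc |ρ θ| ≤ B := hB θ
      _ = B * (ε ^ 2)⁻¹ * ε ^ 2 := by field_simp
      _ ≤ B * (ε ^ 2)⁻¹ * (x - C θ) ^ 2 := by
          have h5 : ε ^ 2 ≤ (x - C θ) ^ 2 := pow_le_pow_left₀ hε_pos.le h1 2
          have : 0 ≤ B * (ε ^ 2)⁻¹ := by positivity
          exact mul_le_mul_of_nonneg_left h5 this
  · exact intervalIntegrable_const
  · refine Eventually.of_forall fun θ _ x hx' => ?_
    have h2 : x - C θ ≠ 0 := (lt_of_lt_of_le hε_pos (hballpos x hx' θ)).ne'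
    have h0 : HasDerivAt (fun y : ℝ => y - C θ) 1 x := (hasDerivAt_id x).sub_const _
    have h3 := (h0.inv h2).const_mul (ρ θ)
    have heq : (fun y => ρ θ / (y - C θ)) = fun y => ρ θ * (y - C θ)⁻¹ := by
      funext y; rw [div_eq_mul_inv]
    rw [heq]
    have hval : -(ρ θ / (x - C θ) ^ 2) = ρ θ * (-1 / (x - C θ) ^ 2) := by ring
    show HasDerivAt _ (-(ρ θ / (x - C θ) ^ 2)) x
    rw [hval]; exact h3

end Aux

theorem stmt9
    (S : ℝ) (hS : 0 < S)
    (C Sg c s : ℝ → ℝ)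
    (hC_lip : ∃ K : NNReal, LipschitzWith K C)
    (hSg_lip : ∃ K : NNReal, LipschitzWith K Sg)
    (hC_per : Function.Periodic C (2 * S))
    (hSg_per : Function.Periodic Sg (2 * S))
    (hc_meas : Measurable c) (hs_meas : Measurable s)
    (hc_bdd : ∃ B : ℝ, ∀ θ, |c θ| ≤ B) (hs_bdd : ∃ B : ℝ, ∀ θ, |s θ| ≤ B)
    (hconv : ∀ᵐ θ ∂(volume : Measure ℝ), HasDerivAt C (-(s θ)) θ ∧ HasDerivAt Sg (c θ) θ ∧
      c θ * C θ + s θ * Sg θ = 1)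
    (M : ℝ) (hM : IsGreatest (C '' Set.Icc 0 (2 * S)) M)
    (L F : ℝ → ℝ)
    (hL : ∀ l : ℝ, M < l → L l = ∫ θ in (0:ℝ)..(2*S), 1 / (l - C θ))
    (hF : ∀ l : ℝ, M < l → F l = ∫ θ in (0:ℝ)..(2*S), c θ / (l - C θ))
    (hM0 : 0 < M) :
    ∀ l : ℝ, M < l →
      IntegrableOn (fun μ : ℝ => deriv L μ / μ) (Set.Ioi l) volume ∧
      IntegrableOn (fun μ : ℝ => L μ / μ ^ 2) (Set.Ioi l) volume ∧
      F l = -∫ μ in Set.Ioi l, deriv L μ / μ ∧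
      F l = L l / l - ∫ μ in Set.Ioi l, L μ / μ ^ 2 := by
  intro l hl
  have h2S : (0:ℝ) < 2 * S := by linarith
  obtain ⟨KC, hKC⟩ := hC_lip
  obtain ⟨KS, hKS⟩ := hSg_lip
  have hCcont : Continuous C := hKC.continuous
  have hScont : Continuous Sg := hKS.continuous
  have hCle : ∀ θ, C θ ≤ M := by
    intro θ
    obtain ⟨y, hy, hEq⟩ := hC_per.exists_mem_Ico₀ h2S θ
    rw [hEq]
    exact hM.2 ⟨y, ⟨hy.1, hy.2.le⟩, rfl⟩
  obtain ⟨Bc, hBc⟩ := hc_bdd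
  have hBc0 : 0 ≤ Bc := le_trans (abs_nonneg _) (hBc 0)
  obtain ⟨BS, hBS'⟩ : ∃ B, ∀ y ∈ Set.Icc (0:ℝ) (2*S), ‖Sg y‖ ≤ B :=
    (isCompact_Icc).exists_bound_of_continuousOn hScont.continuousOn
  have hBS : ∀ θ, |Sg θ| ≤ BS := by
    intro θ
    obtain ⟨y, hy, hEq⟩ := hSg_per.exists_mem_Ico₀ h2S θ
    rw [hEq]
    exact hBS' y ⟨hy.1, hy.2.le⟩
  have hl0 : 0 < l := lt_trans hM0 hl
  -- derivative of L
  have hLd : ∀ μ, M < μ → HasDerivAt L (-∫ θ in (0:ℝ)..(2*S), 1 / (μ - C θ) ^ 2) μ := by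
    intro μ hμ
    have h1 : HasDerivAt (fun x => ∫ θ in (0:ℝ)..(2*S), 1 / (x - C θ))
        (-∫ θ in (0:ℝ)..(2*S), 1 / (μ - C θ) ^ 2) μ :=
      param_deriv (2*S) C (fun _ => 1) hCcont measurable_const 1 (by norm_num) M hCle μ hμ
    refine h1.congr_of_eventuallyEq ?_
    filter_upwards [IsOpen.mem_nhds isOpen_Ioi hμ] with x hx
    exact hL x hx
  have hderivL : ∀ μ, M < μ → deriv L μ = -∫ θ in (0:ℝ)..(2*S), 1 / (μ - C θ) ^ 2 :=
    fun μ hμ => (hLd μ hμ).deriv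
  -- derivative of F
  have hFd : ∀ μ, M < μ → HasDerivAt F (-∫ θ in (0:ℝ)..(2*S), c θ / (μ - C θ) ^ 2) μ := by
    intro μ hμ
    have h1 : HasDerivAt (fun x => ∫ θ in (0:ℝ)..(2*S), c θ / (x - C θ))
        (-∫ θ in (0:ℝ)..(2*S), c θ / (μ - C θ) ^ 2) μ :=
      param_deriv (2*S) C c hCcont hc_meas Bc hBc M hCle μ hμ
    refine h1.congr_of_eventuallyEq ?_
    filter_upwards [IsOpen.mem_nhds isOpen_Ioi hμ] with x hx
    exact hF x hx
  -- key identity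
  have hkey : ∀ μ, M < μ → μ * (∫ θ in (0:ℝ)..(2*S), c θ / (μ - C θ) ^ 2)
      = ∫ θ in (0:ℝ)..(2*S), 1 / (μ - C θ) ^ 2 := by
    intro μ hμ
    set δ : ℝ := μ - M with hδdef
    have hδ : 0 < δ := by simp [hδdef]; linarith
    have hd : ∀ θ, δ ≤ μ - C θ := fun θ => by
      have := hCle θ; simp [hδdef]; linarith
    have hdpos : ∀ θ, 0 < μ - C θ := fun θ => lt_of_lt_of_le hδ (hd θ)
    set g : ℝ → ℝ := fun θ => Sg θ * (μ - C θ)⁻¹ with hgdef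
    set g' : ℝ → ℝ := fun θ => (μ * c θ - 1) / (μ - C θ) ^ 2 with hg'def
    have hCd : ∀ x y : ℝ, |C x - C y| ≤ (KC : ℝ) * |x - y| := fun x y => by
      simpa [Real.dist_eq] using hKC.dist_le_mul x y
    have hSd : ∀ x y : ℝ, |Sg x - Sg y| ≤ (KS : ℝ) * |x - y| := fun x y => by
      simpa [Real.dist_eq] using hKS.dist_le_mul x y
    have hBS0 : 0 ≤ BS := le_trans (abs_nonneg _) (hBS 0)
    have hinv : ∀ x y : ℝ, |(μ - C x)⁻¹ - (μ - C y)⁻¹| ≤ (KC : ℝ) / δ ^ 2 * |x - y| := by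
      intro x y
      have hax := hdpos x
      have hay := hdpos y
      have heq : (μ - C x)⁻¹ - (μ - C y)⁻¹ = (C x - C y) / ((μ - C x) * (μ - C y)) := by
        field_simp
        ring
      rw [heq, abs_div, abs_of_pos (mul_pos hax hay)]
      have h1 : δ ^ 2 ≤ (μ - C x) * (μ - C y) := by
        have := mul_le_mul (hd x) (hd y) hδ.le (hdpos x).le
        nlinarith
      calc |C x - C y| / ((μ - C x) * (μ - C y))
          ≤ (KC : ℝ) * |x - y| / δ ^ 2 :=
            div_le_div₀ (by positivity) (hCd x y) (by positivity) h1
        _ = (KC : ℝ) / δ ^ 2 * |x - y| := by ring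
    set Kg : ℝ := BS * ((KC : ℝ) / δ ^ 2) + (KS : ℝ) / δ with hKgdef
    have hlipg : ∀ x y : ℝ, |g x - g y| ≤ Kg * |x - y| := by
      intro x y
      have hsplit : g x - g y = Sg x * ((μ - C x)⁻¹ - (μ - C y)⁻¹)
          + (Sg x - Sg y) * (μ - C y)⁻¹ := by simp [hgdef]; ring
      have hay := hdpos y
      have hinvy : |(μ - C y)⁻¹| ≤ δ⁻¹ := by
        rw [abs_of_pos (inv_pos.mpr hay)]
        exact inv_anti₀ hδ (hd y)
      calc |g x - g y| ≤ |Sg x * ((μ - C x)⁻¹ - (μ - C y)⁻¹)|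
            + |(Sg x - Sg y) * (μ - C y)⁻¹| := by rw [hsplit]; exact abs_add_le _ _
        _ ≤ BS * ((KC : ℝ) / δ ^ 2 * |x - y|) + (KS : ℝ) * |x - y| * δ⁻¹ := by
            rw [abs_mul, abs_mul]
            gcongr
            · exact hBS x
            · exact hinv x y
            · exact hSd x y
        _ = Kg * |x - y| := by rw [hKgdef]; ring
    have hcontg : Continuous g := by
      apply hScont.mul
      exact (continuous_const.sub hCcont).inv₀ fun θ => (hdpos θ).ne'
    have hg'meas : AEStronglyMeasurable g' (volume.restrict (Set.Ioc 0 (2*S))) := by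
      apply Measurable.aestronglyMeasurable
      exact ((measurable_const.mul hc_meas).sub measurable_const).div
        ((measurable_const.sub hCcont.measurable).pow_const 2)
    have hderivg : ∀ᵐ θ ∂(volume : Measure ℝ), HasDerivAt g (g' θ) θ := by
      filter_upwards [hconv] with θ ⟨hCθ, hSθ, hpyth⟩
      have h1 : HasDerivAt (fun t => μ - C t) (s θ) θ := by
        simpa using hCθ.const_sub μ
      have h2 := h1.inv (hdpos θ).ne'
      have h3 := hSθ.mul h2
      have hval : c θ * (μ - C θ)⁻¹ + Sg θ * (-(s θ) / (μ - C θ) ^ 2) = g' θ := by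
        rw [hg'def]
        have hne := (hdpos θ).ne'
        field_simp
        linear_combination (-1 : ℝ) * hpyth
      rw [← hval]
      exact h3
    have hiz : ∫ θ in Set.Ioc 0 (2*S), g' θ = g (2*S) - g 0 :=
      ftc_ae_lip g g' 0 (2*S) h2S.le Kg hcontg hlipg hg'meas hderivg
    have hper : g (2*S) = g 0 := by
      have hC2 : C (2*S) = C 0 := by simpa using hC_per 0
      have hS2 : Sg (2*S) = Sg 0 := by simpa using hSg_per 0
      simp [hgdef, hC2, hS2]
    rw [hper, sub_self] at hiz
    -- split the integral
    have hint1 : IntegrableOn (fun θ => c θ / (μ - C θ) ^ 2) (Set.Ioc 0 (2*S)) volume := by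
      have hfin : (volume (Set.Ioc (0:ℝ) (2*S))) < ⊤ := measure_Ioc_lt_top
      refine Integrable.mono' (integrableOn_const hfin.ne :
        IntegrableOn (fun _ : ℝ => Bc * (δ ^ 2)⁻¹) _ _) ?_ ?_
      · exact (hc_meas.div ((measurable_const.sub hCcont.measurable).pow_const 2)).aestronglyMeasurable
      · refine Eventually.of_forall fun θ => ?_
        rw [Real.norm_eq_abs, abs_div, abs_of_pos (pow_pos (hdpos θ) 2)]
        have h1 : δ ^ 2 ≤ (μ - C θ) ^ 2 := pow_le_pow_left₀ hδ.le (hd θ) 2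
        calc |c θ| / (μ - C θ) ^ 2 ≤ Bc / δ ^ 2 :=
              div_le_div₀ hBc0 (hBc θ) (by positivity) h1
          _ = Bc * (δ ^ 2)⁻¹ := by ring
    have hint2 : IntegrableOn (fun θ => 1 / (μ - C θ) ^ 2) (Set.Ioc 0 (2*S)) volume := by
      apply Continuous.integrableOn_Ioc
      exact continuous_const.div ((continuous_const.sub hCcont).pow 2)
        fun θ => (pow_pos (hdpos θ) 2).ne'
    have hsplit : ∫ θ in Set.Ioc 0 (2*S), g' θ
        = μ * (∫ θ in Set.Ioc 0 (2*S), c θ / (μ - C θ) ^ 2)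
          - ∫ θ in Set.Ioc 0 (2*S), 1 / (μ - C θ) ^ 2 := by
      rw [← integral_const_mul, ← integral_sub (hint1.const_mul μ) hint2]
      apply setIntegral_congr_fun measurableSet_Ioc
      intro θ _
      simp only [hg'def]
      ring
    rw [hiz] at hsplit
    have hIoc1 : ∫ θ in (0:ℝ)..(2*S), c θ / (μ - C θ) ^ 2
        = ∫ θ in Set.Ioc 0 (2*S), c θ / (μ - C θ) ^ 2 :=
      intervalIntegral.integral_of_le h2S.le
    have hIoc2 : ∫ θ in (0:ℝ)..(2*S), 1 / (μ - C θ) ^ 2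
        = ∫ θ in Set.Ioc 0 (2*S), 1 / (μ - C θ) ^ 2 :=
      intervalIntegral.integral_of_le h2S.le
    rw [hIoc1, hIoc2]
    linarith
  -- F' = L'/μ
  have hFd' : ∀ μ, M < μ → HasDerivAt F (deriv L μ / μ) μ := by
    intro μ hμ
    have hμ0 : (0:ℝ) < μ := lt_trans hM0 hμ
    have hval : deriv L μ / μ = -∫ θ in (0:ℝ)..(2*S), c θ / (μ - C θ) ^ 2 := by
      rw [hderivL μ hμ, ← hkey μ hμ, neg_div, mul_div_cancel_left₀ _ (ne_of_gt hμ0)]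
    rw [hval]
    exact hFd μ hμ
  -- uniform bounds
  have hGb : ∀ μ, M < μ → |∫ θ in (0:ℝ)..(2*S), 1 / (μ - C θ) ^ 2|
      ≤ ((μ - M) ^ 2)⁻¹ * (2 * S) := by
    intro μ hμ
    have hδ : (0:ℝ) < μ - M := by linarith
    rw [intervalIntegral.integral_of_le h2S.le]
    have := norm_setIntegral_le_of_norm_le_const (C := ((μ - M) ^ 2)⁻¹)
      (s := Set.Ioc (0:ℝ) (2*S)) (μ := volume)
      (f := fun θ => 1 / (μ - C θ) ^ 2) measure_Ioc_lt_top ?_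
    · rw [Real.volume_real_Ioc_of_le h2S.le] at this
      simpa [ENNReal.toReal_ofReal h2S.le] using this
    · intro θ _
      have h1 : 0 < μ - C θ := by linarith [hCle θ]
      have h2 : (μ - M) ^ 2 ≤ (μ - C θ) ^ 2 := by nlinarith [hCle θ]
      rw [Real.norm_eq_abs, abs_of_pos (by positivity : (0:ℝ) < 1 / (μ - C θ) ^ 2)]
      rw [one_div]
      exact inv_anti₀ (by positivity) h2
  have hLb : ∀ μ, M < μ → |L μ| ≤ (μ - M)⁻¹ * (2 * S) := by
    intro μ hμ
    have hδ : (0:ℝ) < μ - M := by linarith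
    rw [hL μ hμ, intervalIntegral.integral_of_le h2S.le]
    have := norm_setIntegral_le_of_norm_le_const (C := (μ - M)⁻¹)
      (s := Set.Ioc (0:ℝ) (2*S)) (μ := volume)
      (f := fun θ => 1 / (μ - C θ)) measure_Ioc_lt_top ?_
    · rw [Real.volume_real_Ioc_of_le h2S.le] at this
      simpa [ENNReal.toReal_ofReal h2S.le] using this
    · intro θ _
      have h1 : 0 < μ - C θ := by linarith [hCle θ]
      rw [Real.norm_eq_abs, abs_of_pos (by positivity : (0:ℝ) < 1 / (μ - C θ))]
      rw [one_div]
      exact inv_anti₀ hδ (by linarith [hCle θ])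
  have hFb : ∀ μ, M < μ → |F μ| ≤ Bc * (μ - M)⁻¹ * (2 * S) := by
    intro μ hμ
    have hδ : (0:ℝ) < μ - M := by linarith
    rw [hF μ hμ, intervalIntegral.integral_of_le h2S.le]
    have := norm_setIntegral_le_of_norm_le_const (C := Bc * (μ - M)⁻¹)
      (s := Set.Ioc (0:ℝ) (2*S)) (μ := volume)
      (f := fun θ => c θ / (μ - C θ)) measure_Ioc_lt_top ?_
    · rw [Real.volume_real_Ioc_of_le h2S.le] at this
      simpa [ENNReal.toReal_ofReal h2S.le] using this
    · intro θ _
      have h1 : 0 < μ - C θ := by linarith [hCle θ]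
      rw [Real.norm_eq_abs, abs_div, abs_of_pos h1]
      calc |c θ| / (μ - C θ) ≤ Bc / (μ - M) :=
            div_le_div₀ hBc0 (hBc θ) hδ (by linarith [hCle θ])
        _ = Bc * (μ - M)⁻¹ := by ring
  -- integrability of μ⁻²
  have hmu2 : IntegrableOn (fun μ : ℝ => (μ ^ 2)⁻¹) (Set.Ioi l) volume := by
    have h := integrableOn_Ioi_rpow_of_lt (by norm_num : (-2:ℝ) < -1) hl0
    refine h.congr_fun (fun t ht => ?_) measurableSet_Ioi
    have ht0 : 0 < t := lt_trans hl0 ht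
    show t ^ (-2:ℝ) = (t ^ 2)⁻¹
    rw [Real.rpow_neg ht0.le, ← Real.rpow_natCast t 2]
    norm_num
  -- domination of (μ-M)⁻²
  set a : ℝ := 1 - M / l with hadef
  have ha : 0 < a := by
    rw [hadef, sub_pos]
    exact (div_lt_one hl0).mpr hl
  have hdom : ∀ μ : ℝ, μ ∈ Set.Ioi l → ((μ - M) ^ 2)⁻¹ ≤ (a ^ 2)⁻¹ * (μ ^ 2)⁻¹ := by
    intro μ hμ
    have hμl : l < μ := hμ
    have hμ0 : 0 < μ := lt_trans hl0 hμl
    have hμM : 0 < μ - M := by linarith [hl]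
    have h1 : μ * a ≤ μ - M := by
      rw [hadef]
      rw [mul_sub, mul_one]
      have h9 : M ≤ μ * (M / l) := by
        rw [← mul_div_assoc, le_div_iff₀ hl0]
        nlinarith
      linarith
    have h2 : (μ * a) ^ 2 ≤ (μ - M) ^ 2 := by
      have := mul_pos hμ0 ha
      nlinarith
    have h3 : ((μ - M) ^ 2)⁻¹ ≤ ((μ * a) ^ 2)⁻¹ := inv_anti₀ (by positivity) h2
    calc ((μ - M) ^ 2)⁻¹ ≤ ((μ * a) ^ 2)⁻¹ := h3
      _ = (a ^ 2)⁻¹ * (μ ^ 2)⁻¹ := by rw [mul_pow]; rw [mul_inv]; ring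
  -- integrability 1
  have int1 : IntegrableOn (fun μ : ℝ => deriv L μ / μ) (Set.Ioi l) volume := by
    refine Integrable.mono' ((hmu2.const_mul ((2 * S / l) * (a ^ 2)⁻¹)) :
      IntegrableOn (fun μ : ℝ => (2 * S / l) * (a ^ 2)⁻¹ * (μ ^ 2)⁻¹) _ _) ?_ ?_
    · exact ((measurable_deriv L).div measurable_id).aestronglyMeasurable
    · rw [ae_restrict_iff' measurableSet_Ioi]
      refine Eventually.of_forall fun μ hμ => ?_
      have hμl : l < μ := hμ
      have hμM : M < μ := lt_trans hl hμl
      have hμ0 : 0 < μ := lt_trans hl0 hμl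
      rw [Real.norm_eq_abs, abs_div, abs_of_pos hμ0]
      have h1 : |deriv L μ| ≤ ((μ - M) ^ 2)⁻¹ * (2 * S) := by
        rw [hderivL μ hμM, abs_neg]
        exact hGb μ hμM
      calc |deriv L μ| / μ ≤ ((μ - M) ^ 2)⁻¹ * (2 * S) / l :=
            div_le_div₀ (by positivity) h1 hl0 hμl.le
        _ ≤ (a ^ 2)⁻¹ * (μ ^ 2)⁻¹ * (2 * S) / l := by
            have := hdom μ hμ
            gcongr
        _ = 2 * S / l * (a ^ 2)⁻¹ * (μ ^ 2)⁻¹ := by ring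
  -- integrability 2
  have hLcont : ContinuousOn L (Set.Ioi l) := fun μ hμ =>
    ((hLd μ (lt_trans hl hμ)).continuousAt).continuousWithinAt
  have int2 : IntegrableOn (fun μ : ℝ => L μ / μ ^ 2) (Set.Ioi l) volume := by
    refine Integrable.mono' ((hmu2.const_mul ((l - M)⁻¹ * (2 * S))) :
      IntegrableOn (fun μ : ℝ => (l - M)⁻¹ * (2 * S) * (μ ^ 2)⁻¹) _ _) ?_ ?_
    · refine ContinuousOn.aestronglyMeasurable ?_ measurableSet_Ioi
      exact hLcont.div (continuous_pow 2).continuousOn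
        fun μ hμ => pow_ne_zero 2 (ne_of_gt (lt_trans hl0 hμ))
    · rw [ae_restrict_iff' measurableSet_Ioi]
      refine Eventually.of_forall fun μ hμ => ?_
      have hμl : l < μ := hμ
      have hμM : M < μ := lt_trans hl hμl
      have hμ0 : 0 < μ := lt_trans hl0 hμl
      rw [Real.norm_eq_abs, abs_div, abs_of_pos (by positivity : (0:ℝ) < μ ^ 2)]
      have h1 : |L μ| ≤ (l - M)⁻¹ * (2 * S) := by
        refine le_trans (hLb μ hμM) ?_
        have h2 : (μ - M)⁻¹ ≤ (l - M)⁻¹ :=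
          inv_anti₀ (by linarith) (by linarith)
        exact mul_le_mul_of_nonneg_right h2 (by linarith)
      calc |L μ| / μ ^ 2 ≤ (l - M)⁻¹ * (2 * S) / μ ^ 2 := by gcongr
        _ = (l - M)⁻¹ * (2 * S) * (μ ^ 2)⁻¹ := by ring
  -- limits at infinity
  have htendF : Tendsto F atTop (𝓝 0) := by
    apply squeeze_zero_norm' (a := fun μ => Bc * (2 * S) * (μ - M)⁻¹)
    · filter_upwards [eventually_gt_atTop M] with μ hμ
      calc ‖F μ‖ ≤ Bc * (μ - M)⁻¹ * (2 * S) := hFb μ hμ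
        _ = Bc * (2 * S) * (μ - M)⁻¹ := by ring
    · have h1 : Tendsto (fun μ : ℝ => (μ - M)⁻¹) atTop (𝓝 0) :=
        (tendsto_atTop_add_const_right atTop (-M) tendsto_id).inv_tendsto_atTop
      simpa using h1.const_mul (Bc * (2 * S))
  have htendL : Tendsto (fun μ => L μ / μ) atTop (𝓝 0) := by
    apply squeeze_zero_norm' (a := fun μ => 2 * S * (μ - M)⁻¹)
    · filter_upwards [eventually_gt_atTop M, eventually_ge_atTop (1:ℝ)] with μ hμ hμ1
      have hμ0 : (0:ℝ) < μ := lt_of_lt_of_le zero_lt_one hμ1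
      rw [Real.norm_eq_abs, abs_div, abs_of_pos hμ0]
      calc |L μ| / μ ≤ |L μ| / 1 :=
            div_le_div_of_nonneg_left (abs_nonneg _) zero_lt_one hμ1
        _ = |L μ| := div_one _
        _ ≤ (μ - M)⁻¹ * (2 * S) := hLb μ hμ
        _ = 2 * S * (μ - M)⁻¹ := by ring
    · have h1 : Tendsto (fun μ : ℝ => (μ - M)⁻¹) atTop (𝓝 0) :=
        (tendsto_atTop_add_const_right atTop (-M) tendsto_id).inv_tendsto_atTop
      simpa using h1.const_mul (2 * S)
  -- first identity
  have heq1 : ∫ μ in Set.Ioi l, deriv L μ / μ = 0 - F l := by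
    refine integral_Ioi_of_hasDerivAt_of_tendsto ?_ ?_ int1 htendF
    · exact (hFd' l hl).continuousAt.continuousWithinAt
    · exact fun x hx => hFd' x (lt_trans hl hx)
  have eq1 : F l = -∫ μ in Set.Ioi l, deriv L μ / μ := by
    rw [heq1]; ring
  -- second identity
  have heq2 : ∫ μ in Set.Ioi l, (deriv L μ / μ - L μ / μ ^ 2) = 0 - L l / l := by
    refine integral_Ioi_of_hasDerivAt_of_tendsto
      (f := fun μ => L μ / μ) (f' := fun μ => deriv L μ / μ - L μ / μ ^ 2)
      ?_ ?_ (int1.sub int2) htendL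
    · have hder : HasDerivAt (fun μ => L μ / μ)
          ((-(∫ θ in (0:ℝ)..(2*S), 1 / (l - C θ) ^ 2) * l - L l * 1) / l ^ 2) l :=
        (hLd l hl).div (hasDerivAt_id l) (ne_of_gt hl0)
      exact hder.continuousAt.continuousWithinAt
    · intro x hx
      have hxM : M < x := lt_trans hl hx
      have hx0 : (0:ℝ) < x := lt_trans hl0 hx
      have hder := (hLd x hxM).div (hasDerivAt_id x) (ne_of_gt hx0)
      have hval : (-(∫ θ in (0:ℝ)..(2*S), 1 / (x - C θ) ^ 2) * x - L x * 1) / x ^ 2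
          = deriv L x / x - L x / x ^ 2 := by
        rw [hderivL x hxM]
        field_simp
      show HasDerivAt (fun μ => L μ / μ) (deriv L x / x - L x / x ^ 2) x
      rw [← hval]
      exact hder
  have heq2' : (∫ μ in Set.Ioi l, deriv L μ / μ) - ∫ μ in Set.Ioi l, L μ / μ ^ 2
      = - (L l / l) := by
    rw [← integral_sub int1 int2]
    rw [heq2]; ring
  refine ⟨int1, int2, eq1, ?_⟩
  rw [eq1]
  linarith
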